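/- In a connected plane graph, every circulation (flow with zero balance at every vertex) can be written as a linear combination of the clockwise face cycles: there is a potential π on the faces such that the flow on each arc e equals π(right face of e) − π(left face of e). -/

import Mathlib

open Finset

open Module Matrix

section Aux
variable {A E : Type} [Fintype A] [Fintype E] [DecidableEq A]

/-- Incidence-style matrix of a "graph" with edge endpoints `s, t`. -/
noncomputable def incMat (s t : E → A) : Matrix A E ℝ :=
  fun a e => (if s e = a then (1:ℝ) else 0) - (if t e = a then 1 else 0)

lemma incMat_transpose_mulVecLin (s t : E → A) (g : A → ℝ) (e : E) :
    (incMat s t)ᵀ.mulVecLin g e = g (s e) - g (t e) := by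
  simp only [Matrix.mulVecLin_apply, Matrix.mulVec, dotProduct, Matrix.transpose_apply,
    incMat, sub_mul, one_mul, zero_mul, ite_mul, Finset.sum_sub_distrib]
  rw [Finset.sum_ite_eq, Finset.sum_ite_eq]
  simp

lemma mulVecLin_incMat (s t : E → A) (g : E → ℝ) (a : A) :
    (incMat s t).mulVecLin g a =
      (∑ e, if s e = a then g e else 0) - (∑ e, if t e = a then g e else 0) := by
  simp [Matrix.mulVecLin_apply, Matrix.mulVec, dotProduct, incMat, sub_mul, ite_mul,
    Finset.sum_sub_distrib]

lemma ker_incMat_transpose (s t : E → A)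
    (hconn : ∀ a b : A, Relation.ReflTransGen
      (fun x y => ∃ e, (s e = x ∧ t e = y) ∨ (s e = y ∧ t e = x)) a b) [Nonempty A] :
    LinearMap.ker (incMat s t)ᵀ.mulVecLin = Submodule.span ℝ {(1 : A → ℝ)} := by
  apply le_antisymm
  · intro g hg
    have hg' : ∀ e, g (s e) = g (t e) := by
      intro e
      have := congrFun (LinearMap.mem_ker.mp hg) e
      rw [incMat_transpose_mulVecLin] at this
      simp only [Pi.zero_apply] at this
      linarith
    have hcst : ∀ a b : A, g a = g b := by
      intro a b
      induction hconn a b with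
      | refl => rfl
      | tail _ hstep ih =>
        obtain ⟨e, he⟩ := hstep
        rcases he with ⟨h1, h2⟩ | ⟨h1, h2⟩
        · rw [ih, ← h1, ← h2, hg']
        · rw [ih, ← h1, ← h2, hg']
    obtain ⟨a₀⟩ := ‹Nonempty A›
    have : g = g a₀ • (1 : A → ℝ) := by
      funext a; simp [hcst a a₀]
    rw [this]
    exact Submodule.smul_mem _ _ (Submodule.mem_span_singleton_self _)
  · rw [Submodule.span_singleton_le_iff_mem, LinearMap.mem_ker]
    funext e
    rw [incMat_transpose_mulVecLin]
    simp

lemma finrank_ker_incMat_transpose (s t : E → A)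
    (hconn : ∀ a b : A, Relation.ReflTransGen
      (fun x y => ∃ e, (s e = x ∧ t e = y) ∨ (s e = y ∧ t e = x)) a b) [Nonempty A] :
    finrank ℝ (LinearMap.ker (incMat s t)ᵀ.mulVecLin) = 1 := by
  rw [ker_incMat_transpose s t hconn, finrank_span_singleton]
  intro h
  have := congrFun h (Classical.arbitrary A)
  simpa using this

lemma rank_incMat (s t : E → A)
    (hconn : ∀ a b : A, Relation.ReflTransGen
      (fun x y => ∃ e, (s e = x ∧ t e = y) ∨ (s e = y ∧ t e = x)) a b) [Nonempty A] :
    (incMat s t).rank + 1 = Fintype.card A := by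
  rw [← Matrix.rank_transpose]
  have h := LinearMap.finrank_range_add_finrank_ker (incMat s t)ᵀ.mulVecLin
  rw [finrank_ker_incMat_transpose s t hconn] at h
  simpa [Matrix.rank, Module.finrank_pi] using h

end Aux



/-- A plane directed graph: arcs with endpoints, and for each arc the faces on
its left-hand side and right-hand side in the embedding. -/
structure PlaneGraph (V E H : Type) where
  src : E → V
  dst : E → V
  left : E → H
  right : E → H

variable {V E H : Type}

/-- Net outflow of `f` at a vertex. -/
def netAt [Fintype E] [DecidableEq V] (G : PlaneGraph V E H) (f : E → ℝ) (v : V) : ℝ :=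
  (∑ e, if G.src e = v then f e else 0) - (∑ e, if G.dst e = v then f e else 0)

/-- The clockwise unit flow around face `h`: `+1` on arcs with `h` on the right,
`-1` on arcs with `h` on the left. -/
def faceFlow [DecidableEq H] (G : PlaneGraph V E H) (h : H) (e : E) : ℝ :=
  (if G.right e = h then 1 else 0) - (if G.left e = h then 1 else 0)

/-- The underlying undirected graph of `G` is connected. -/
def PrimalConnected (G : PlaneGraph V E H) : Prop :=
  ∀ a b : V, Relation.ReflTransGen
    (fun x y => ∃ e, (G.src e = x ∧ G.dst e = y) ∨ (G.src e = y ∧ G.dst e = x)) a b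

/-- The geometric dual graph of `G` is connected. -/
def DualConnected (G : PlaneGraph V E H) : Prop :=
  ∀ a b : H, Relation.ReflTransGen
    (fun x y => ∃ e, (G.left e = x ∧ G.right e = y) ∨ (G.left e = y ∧ G.right e = x)) a b

/-- The boundary of every face is a circulation (a property of plane embeddings). -/
def FaceCond [Fintype E] [DecidableEq V] [DecidableEq H] (G : PlaneGraph V E H) : Prop :=
  ∀ (h : H) (v : V), netAt G (faceFlow G h) v = 0

/-- Euler's formula `|V| - |E| + |H| = 2` for the embedding on the sphere. -/
def EulerFormula (V E H : Type) [Fintype V] [Fintype E] [Fintype H] : Prop :=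
  (Fintype.card V : ℤ) - Fintype.card E + Fintype.card H = 2

/-- The cost of sending one unit of flow clockwise around face `h`. -/
def faceCost [Fintype E] [DecidableEq H] (G : PlaneGraph V E H) (c : E → ℝ) (h : H) : ℝ :=
  (∑ e, if G.right e = h then c e else 0) - (∑ e, if G.left e = h then c e else 0)

/-- In a connected plane graph, every circulation is a combination of the
clockwise face cycles: there is a face potential `π` with
`f(e) = π(right(e)) - π(left(e))` for every arc `e`. -/
theorem stmt2 {V E H : Type} [Fintype V] [Fintype E] [Fintype H]
    [DecidableEq V] [DecidableEq H]
    (G : PlaneGraph V E H)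
    (hconn : PrimalConnected G) (hdual : DualConnected G)
    (heuler : EulerFormula V E H) (hface : FaceCond G)
    (f : E → ℝ) (hf : ∀ v, netAt G f v = 0) :
    ∃ π : H → ℝ, ∀ e, f e = π (G.right e) - π (G.left e) := by
  classical
  -- nonemptiness
  haveI hV : Nonempty V := by
    by_contra hne
    rw [not_nonempty_iff] at hne
    haveI hE : IsEmpty E := ⟨fun e => hne.false (G.src e)⟩
    haveI : Subsingleton H := ⟨fun a b => by
      induction hdual a b with
      | refl => rfl
      | tail _ hstep ih => obtain ⟨e, _⟩ := hstep; exact hE.elim e⟩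
    have h1 : Fintype.card V = 0 := Fintype.card_eq_zero
    have h2 : Fintype.card E = 0 := Fintype.card_eq_zero
    have h3 : Fintype.card H ≤ 1 := Fintype.card_le_one_iff_subsingleton.mpr ‹_›
    rw [EulerFormula] at heuler
    omega
  haveI hH : Nonempty H := by
    by_contra hne
    rw [not_nonempty_iff] at hne
    haveI hE : IsEmpty E := ⟨fun e => hne.false (G.left e)⟩
    haveI : Subsingleton V := ⟨fun a b => by
      induction hconn a b with
      | refl => rfl
      | tail _ hstep ih => obtain ⟨e, _⟩ := hstep; exact hE.elim e⟩
    have h1 : Fintype.card H = 0 := Fintype.card_eq_zero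
    have h2 : Fintype.card E = 0 := Fintype.card_eq_zero
    have h3 : Fintype.card V ≤ 1 := Fintype.card_le_one_iff_subsingleton.mpr ‹_›
    rw [EulerFormula] at heuler
    omega
  set M : Matrix V E ℝ := incMat G.src G.dst with hM
  set N : Matrix H E ℝ := incMat G.right G.left with hN
  set B := M.mulVecLin
  set Φ := Nᵀ.mulVecLin
  have hBnet : ∀ (g : E → ℝ) (v : V), B g v = netAt G g v := by
    intro g v
    show (incMat G.src G.dst).mulVecLin g v = _
    rw [mulVecLin_incMat, netAt]
  have hΦ : ∀ (π : H → ℝ) (e : E), Φ π e = π (G.right e) - π (G.left e) := by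
    intro π e
    show (incMat G.right G.left)ᵀ.mulVecLin π e = _
    rw [incMat_transpose_mulVecLin]
  have hdual' : ∀ a b : H, Relation.ReflTransGen
      (fun x y => ∃ e, (G.right e = x ∧ G.left e = y) ∨ (G.right e = y ∧ G.left e = x)) a b := by
    intro a b
    refine Relation.ReflTransGen.mono ?_ _ _ (hdual a b)
    rintro x y ⟨e, h⟩
    exact ⟨e, by tauto⟩
  -- ranks
  have hrM : M.rank + 1 = Fintype.card V := rank_incMat G.src G.dst hconn
  have hrN : N.rank + 1 = Fintype.card H := rank_incMat G.right G.left hdual'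
  have hrB : Module.finrank ℝ (LinearMap.range B) + Module.finrank ℝ (LinearMap.ker B)
      = Fintype.card E := by
    have := LinearMap.finrank_range_add_finrank_ker B
    simpa [Module.finrank_pi] using this
  have hrangeB : Module.finrank ℝ (LinearMap.range B) = M.rank := rfl
  have hrangeΦ : Module.finrank ℝ (LinearMap.range Φ) = N.rank := by
    rw [← Matrix.rank_transpose]; rfl
  -- range Φ ≤ ker B
  have hle : LinearMap.range Φ ≤ LinearMap.ker B := by
    rintro x ⟨π, rfl⟩
    rw [LinearMap.mem_ker]
    have hx : Φ π = ∑ h, π h • faceFlow G h := by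
      funext e
      rw [hΦ]
      simp only [Finset.sum_apply, Pi.smul_apply, faceFlow, smul_eq_mul, mul_sub, mul_ite,
        mul_one, mul_zero, Finset.sum_sub_distrib, Finset.sum_ite_eq, Finset.mem_univ, if_true]
    rw [hx, map_sum]
    refine Finset.sum_eq_zero fun h _ => ?_
    rw [LinearMap.map_smul]
    have : B (faceFlow G h) = 0 := by
      funext v
      rw [hBnet]
      simpa using hface h v
    rw [this, smul_zero]
  -- equality of finranks via Euler
  have hfr : Module.finrank ℝ (LinearMap.range Φ) = Module.finrank ℝ (LinearMap.ker B) := by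
    rw [EulerFormula] at heuler
    have e1 : (M.rank : ℤ) + 1 = Fintype.card V := by exact_mod_cast hrM
    have e2 : (N.rank : ℤ) + 1 = Fintype.card H := by exact_mod_cast hrN
    have e3 : (Module.finrank ℝ (LinearMap.range B) : ℤ)
        + Module.finrank ℝ (LinearMap.ker B) = Fintype.card E := by exact_mod_cast hrB
    rw [hrangeB] at e3
    rw [hrangeΦ]
    omega
  have heq : LinearMap.range Φ = LinearMap.ker B :=
    Submodule.eq_of_le_of_finrank_eq hle hfr
  have hfmem : f ∈ LinearMap.ker B := by
    rw [LinearMap.mem_ker]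
    funext v
    rw [hBnet]
    exact hf v
  rw [← heq] at hfmem
  obtain ⟨π, hπ⟩ := hfmem
  exact ⟨π, fun e => by rw [← congrFun hπ e, hΦ]⟩
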